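/- Let X be an infinite, coarsely connected space. If X has Property (T), then X is not amenable; consequently, every representation π of ℂ_u[X] on a complex Hilbert space H satisfies H^π = {0}. -/

import Mathlib

open scoped ENNReal Classical

noncomputable section

namespace GeomPropT

variable {X : Type*}

/-- The tube of diameter `R` in `X × X`. -/
def Tube (X : Type*) [EMetricSpace X] (R : ℝ≥0∞) : Set (X × X) :=
  {p : X × X | edist p.1 p.2 ≤ R}

/-- A subset of `X × X` is controlled if it is contained in a tube of finite diameter. -/
def Controlled [EMetricSpace X] (E : Set (X × X)) : Prop :=
  ∃ R : ℝ≥0∞, R < ⊤ ∧ E ⊆ Tube X R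

/-- `X` has bounded geometry if balls of any given finite radius have uniformly
bounded cardinality. -/
def BoundedGeometry (X : Type*) [EMetricSpace X] : Prop :=
  ∀ R : ℝ≥0∞, R < ⊤ → ∃ N : ℕ, ∀ x : X,
    {y : X | edist x y ≤ R}.Finite ∧ {y : X | edist x y ≤ R}.ncard ≤ N

/-- Composition of subsets of `X × X`. -/
def compRel (E F : Set (X × X)) : Set (X × X) :=
  {p : X × X | ∃ z : X, (p.1, z) ∈ E ∧ (z, p.2) ∈ F}

/-- `compPow E n` is the `(n+1)`-fold composition `E^{∘(n+1)}`. -/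
def compPow (E : Set (X × X)) : ℕ → Set (X × X)
  | 0 => E
  | n + 1 => compRel E (compPow E n)

/-- A controlled set is generating if every controlled set is contained in some
iterated composition of it. -/
def Generating [EMetricSpace X] (E : Set (X × X)) : Prop :=
  Controlled E ∧ ∀ F : Set (X × X), Controlled F → ∃ n : ℕ, F ⊆ compPow E n

/-- `X` is monogenic if it admits a controlled generating set. -/
def Monogenic (X : Type*) [EMetricSpace X] : Prop :=
  ∃ E : Set (X × X), Generating E

/-- A "space": bounded geometry, monogenic, with at most countably many coarse
components. -/
structure IsSpace (X : Type*) [EMetricSpace X] : Prop where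
  boundedGeometry : BoundedGeometry X
  monogenic : Monogenic X
  countableComponents : Set.Countable {C : Set X | ∃ x : X, C = {y : X | edist x y < ⊤}}

/-- The support of a matrix. -/
def matSupport (T : X → X → ℂ) : Set (X × X) := {p : X × X | T p.1 p.2 ≠ 0}

/-- Membership in `ℂ_u[X]`: uniformly bounded entries and controlled support. -/
def CuElem [EMetricSpace X] (T : X → X → ℂ) : Prop :=
  (∃ M : ℝ, ∀ x y : X, ‖T x y‖ ≤ M) ∧ Controlled (matSupport T)

/-- The identity matrix. -/
def matOne : X → X → ℂ := fun x y => if x = y then 1 else 0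

/-- Matrix multiplication. -/
def matMul (T S : X → X → ℂ) : X → X → ℂ := fun x y => ∑' z : X, T x z * S z y

/-- Matrix adjoint. -/
def matStar (T : X → X → ℂ) : X → X → ℂ := fun x y => starRingEnd ℂ (T y x)

/-- Matrix powers. -/
def matPow (A : X → X → ℂ) : ℕ → X → X → ℂ
  | 0 => matOne
  | n + 1 => matMul A (matPow A n)

/-- A function `f ∈ ℓ∞(X)` viewed as a diagonal matrix. -/
def diag (f : X → ℂ) : X → X → ℂ := fun x y => if x = y then f x else 0

/-- The matrix of a partial translation: a `{0,1}`-matrix with at most one `1` in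
each row and each column, and controlled support. -/
def IsPartialTranslation [EMetricSpace X] (v : X → X → ℂ) : Prop :=
  (∀ x y : X, v x y = 0 ∨ v x y = 1) ∧
  (∀ x y y' : X, v x y = 1 → v x y' = 1 → y = y') ∧
  (∀ x x' y : X, v x y = 1 → v x' y = 1 → x = x') ∧
  Controlled (matSupport v)

/-- Membership in `S_X`: finite propagation permutation matrices. -/
def IsPermMatrix [EMetricSpace X] (A : X → X → ℂ) : Prop :=
  (∀ x y : X, A x y = 0 ∨ A x y = 1) ∧
  (∀ x : X, ∃! y : X, A x y = 1) ∧
  (∀ y : X, ∃! x : X, A x y = 1) ∧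
  Controlled (matSupport A)

/-- Membership in `A_X` with common row/column sum `c`. -/
def MemAX [EMetricSpace X] (A : X → X → ℂ) (c : ℂ) : Prop :=
  CuElem A ∧ ∀ x : X, HasSum (fun y => A x y) c ∧ HasSum (fun y => A y x) c

variable {H : Type*} [NormedAddCommGroup H] [InnerProductSpace ℂ H]

/-- A representation of `ℂ_u[X]`: a unital `*`-homomorphism into `B(H)`. -/
structure IsRepresentation [EMetricSpace X] [CompleteSpace H]
    (π : (X → X → ℂ) → (H →L[ℂ] H)) : Prop where
  map_one : π matOne = 1
  map_add : ∀ T S : X → X → ℂ, CuElem T → CuElem S → π (T + S) = π T + π S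
  map_smul : ∀ (c : ℂ) (T : X → X → ℂ), CuElem T → π (c • T) = c • π T
  map_mul : ∀ T S : X → X → ℂ, CuElem T → CuElem S → π (matMul T S) = π T * π S
  map_star : ∀ T : X → X → ℂ, CuElem T → π (matStar T) = ContinuousLinearMap.adjoint (π T)

/-- The subspace `H^π` of invariant vectors. -/
def invariantSubmodule [EMetricSpace X] (π : (X → X → ℂ) → (H →L[ℂ] H)) :
    Submodule ℂ H where
  carrier := {ξ : H | ∀ v : X → X → ℂ, IsPartialTranslation v →
    π v ξ = π (matMul v (matStar v)) ξ}
  add_mem' := by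
    intro a b ha hb v hv
    simp only [map_add, ha v hv, hb v hv]
  zero_mem' := by
    intro v hv
    simp
  smul_mem' := by
    intro c ξ hξ v hv
    simp only [map_smul, hξ v hv]

/-- `p` is the orthogonal projection onto `S`. -/
def IsOrthoProjOnto (p : H →L[ℂ] H) (S : Submodule ℂ H) : Prop :=
  ∀ ξ : H, p ξ ∈ S ∧ ξ - p ξ ∈ Sᗮ

/-- Geometric Property (T). -/
def HasPropertyT (X : Type*) [EMetricSpace X] : Prop :=
  ∀ E : Set (X × X), Generating E →
    ∃ c : ℝ, 0 < c ∧
      ∀ (H : Type) [NormedAddCommGroup H] [InnerProductSpace ℂ H] [CompleteSpace H]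
        (π : (X → X → ℂ) → (H →L[ℂ] H)), IsRepresentation π →
        ∀ ξ ∈ (invariantSubmodule π)ᗮ,
          ∃ v : X → X → ℂ, IsPartialTranslation v ∧ matSupport v ⊆ E ∧
            c * ‖ξ‖ ≤ ‖π v ξ - π (matMul v (matStar v)) ξ‖

/-- Bounded functions (elements of `ℓ∞(X)`). -/
def BddFun (f : X → ℂ) : Prop := ∃ M : ℝ, ∀ x : X, ‖f x‖ ≤ M

/-- `f ∘ t`, extended by `0`, where `t` is the partial translation with matrix `v`. -/
def translateFun (v : X → X → ℂ) (f : X → ℂ) : X → ℂ := fun y => ∑' x : X, v x y * f x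

/-- An invariant mean on `ℓ∞(X)`: a positive unital linear functional invariant
under partial translations. -/
def IsInvariantMean [EMetricSpace X] (φ : (X → ℂ) → ℂ) : Prop :=
  (∀ f g : X → ℂ, BddFun f → BddFun g → φ (f + g) = φ f + φ g) ∧
  (∀ (c : ℂ) (f : X → ℂ), BddFun f → φ (c • f) = c * φ f) ∧
  φ (fun _ => 1) = 1 ∧
  (∀ f : X → ℂ, BddFun f → (∀ x, 0 ≤ (f x).re ∧ (f x).im = 0) →
    0 ≤ (φ f).re ∧ (φ f).im = 0) ∧
  (∀ f : X → ℂ, BddFun f → ∀ v : X → X → ℂ, IsPartialTranslation v →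
    (∀ x : X, f x ≠ 0 → ∃ y : X, v x y = 1) → φ (translateFun v f) = φ f)

/-- `X` is amenable if `ℓ∞(X)` admits an invariant mean. -/
def IsAmenable (X : Type*) [EMetricSpace X] : Prop :=
  ∃ φ : (X → ℂ) → ℂ, IsInvariantMean φ

/-- A representation of `ℂ_u[X]` bundled with its Hilbert space. -/
structure HilbertRep (X : Type*) [EMetricSpace X] where
  H : Type
  [nacg : NormedAddCommGroup H]
  [ips : InnerProductSpace ℂ H]
  [cs : CompleteSpace H]
  π : (X → X → ℂ) → (H →L[ℂ] H)
  rep : IsRepresentation π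

attribute [instance] HilbertRep.nacg HilbertRep.ips HilbertRep.cs
/-! ### Auxiliary matrix lemmas -/

section MatrixAux

variable {X : Type*}

lemma diag_mul (f : X → ℂ) (T : X → X → ℂ) :
    matMul (diag f) T = fun x y => f x * T x y := by
  funext x y
  refine tsum_eq_single x (fun z hz => ?_) |>.trans (by simp [diag])
  simp [diag, Ne.symm hz]

lemma diag_mul_diag (f g : X → ℂ) :
    matMul (diag f) (diag g) = diag (fun x => f x * g x) := by
  rw [diag_mul]
  funext x y
  simp only [diag, mul_ite, mul_zero]

lemma diag_add (f g : X → ℂ) : diag f + diag g = diag (f + g) := by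
  funext x y
  by_cases h : x = y <;> simp [diag, h]

lemma diag_smul (c : ℂ) (f : X → ℂ) : c • diag f = diag (c • f) := by
  funext x y
  by_cases h : x = y <;> simp [diag, h]

lemma matStar_diag (f : X → ℂ) :
    matStar (diag f) = diag (fun x => starRingEnd ℂ (f x)) := by
  funext x y
  by_cases h : x = y
  · subst h; simp [matStar, diag]
  · simp [matStar, diag, h, Ne.symm h]

lemma diag_one : (diag (fun _ : X => (1:ℂ))) = matOne := by
  funext x y; simp [diag, matOne]

section EMetric
variable [EMetricSpace X]

lemma controlled_mono {E F : Set (X × X)} (h : F ⊆ E) (hE : Controlled E) :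
    Controlled F := by
  obtain ⟨R, hR, hsub⟩ := hE
  exact ⟨R, hR, h.trans hsub⟩

lemma controlled_diag (f : X → ℂ) : Controlled (matSupport (diag f)) := by
  refine ⟨0, by simp, fun p hp => ?_⟩
  have : p.1 = p.2 := by
    by_contra hne
    simp [matSupport, diag, hne] at hp
  simp [Tube, this]

lemma cuElem_diag {f : X → ℂ} (hf : BddFun f) : CuElem (diag f) := by
  obtain ⟨M, hM⟩ := hf
  refine ⟨⟨M, fun x y => ?_⟩, controlled_diag f⟩
  by_cases h : x = y
  · simpa [diag, h] using hM y
  · simpa [diag, h] using (norm_nonneg _).trans (hM x)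

lemma IsPartialTranslation.entry_norm_le {v : X → X → ℂ}
    (hv : IsPartialTranslation v) (x y : X) : ‖v x y‖ ≤ 1 := by
  rcases hv.1 x y with h | h <;> simp [h]

lemma IsPartialTranslation.cuElem {v : X → X → ℂ} (hv : IsPartialTranslation v) :
    CuElem v :=
  ⟨⟨1, hv.entry_norm_le⟩, hv.2.2.2⟩

lemma matSupport_matStar (v : X → X → ℂ) :
    matSupport (matStar v) = {p : X × X | (p.2, p.1) ∈ matSupport v} := by
  ext p
  simp [matSupport, matStar]

lemma controlled_matStar {v : X → X → ℂ} (hv : Controlled (matSupport v)) :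
    Controlled (matSupport (matStar v)) := by
  obtain ⟨R, hR, hsub⟩ := hv
  refine ⟨R, hR, fun p hp => ?_⟩
  rw [matSupport_matStar] at hp
  have := hsub hp
  simpa [Tube, edist_comm] using this

lemma IsPartialTranslation.cuElem_star {v : X → X → ℂ}
    (hv : IsPartialTranslation v) : CuElem (matStar v) := by
  refine ⟨⟨1, fun x y => ?_⟩, controlled_matStar hv.2.2.2⟩
  simpa [matStar] using hv.entry_norm_le y x

lemma cuElem_diag_mul_pt {f : X → ℂ} (hf : BddFun f) {v : X → X → ℂ}
    (hv : IsPartialTranslation v) : CuElem (matMul (diag f) v) := by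
  rw [diag_mul]
  obtain ⟨M, hM⟩ := hf
  constructor
  · refine ⟨M, fun x y => ?_⟩
    calc ‖f x * v x y‖ = ‖f x‖ * ‖v x y‖ := by
          simp
      _ ≤ M * 1 := by
          refine mul_le_mul (hM x) (hv.entry_norm_le x y) (norm_nonneg _)
            ((norm_nonneg _).trans (hM x))
      _ = M := mul_one M
  · refine controlled_mono (fun p hp => ?_) hv.2.2.2
    simp only [matSupport, Set.mem_setOf_eq] at hp ⊢
    exact fun h => hp (by simp [h])

/-- The "range" of a partial translation. -/
def ptRange (v : X → X → ℂ) : Set X := {x | ∃ y, v x y = 1}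

lemma v_mul_star {v : X → X → ℂ} (hv : IsPartialTranslation v) :
    matMul v (matStar v) = diag (fun x => if x ∈ ptRange v then 1 else 0) := by
  funext x x'
  by_cases hxx : x = x'
  · subst hxx
    by_cases hB : x ∈ ptRange v
    · obtain ⟨y₀, hy₀⟩ := hB
      have : ∑' y, v x y * matStar v y x = v x y₀ * matStar v y₀ x := by
        refine tsum_eq_single y₀ (fun y hy => ?_)
        rcases hv.1 x y with h | h
        · simp [h]
        · exact absurd (hv.2.1 x y y₀ h hy₀) hy
      rw [matMul, this]
      have hmem : x ∈ ptRange v := ⟨y₀, hy₀⟩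
      simp [matStar, hy₀, diag, hmem]
    · have : ∀ y, v x y * matStar v y x = 0 := by
        intro y
        rcases hv.1 x y with h | h
        · simp [h]
        · exact absurd ⟨y, h⟩ hB
      rw [matMul]
      simp only [this, tsum_zero, diag]
      simp [hB]
  · have : ∀ y, v x y * matStar v y x' = 0 := by
      intro y
      rcases hv.1 x y with h | h
      · simp [h]
      · rcases hv.1 x' y with h' | h'
        · simp [matStar, h']
        · exact absurd (hv.2.2.1 x x' y h h') hxx
    rw [matMul]
    simp only [this, tsum_zero, diag]
    simp [hxx]

lemma star_diag_mul {v : X → X → ℂ} (hv : IsPartialTranslation v) (f : X → ℂ) :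
    matMul (matStar v) (matMul (diag f) v) = diag (translateFun v f) := by
  rw [diag_mul]
  funext y y'
  by_cases hyy : y = y'
  · subst hyy
    have : ∀ z, matStar v y z * (f z * v z y) = v z y * f z := by
      intro z
      rcases hv.1 z y with h | h <;> simp [matStar, h] <;> ring
    rw [matMul]
    simp only [this]
    simp [diag, translateFun]
  · have : ∀ z, matStar v y z * (f z * v z y') = 0 := by
      intro z
      rcases hv.1 z y with h | h
      · simp [matStar, h]
      · rcases hv.1 z y' with h' | h'
        · simp [h']
        · exact absurd (hv.2.1 z y y' h h') hyy
    rw [matMul]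
    simp only [this, tsum_zero, diag]
    simp [hyy]

end EMetric

end MatrixAux
/-! ### An invariant vector yields an invariant mean -/

section MeanFromInvariant

variable {X : Type*} [EMetricSpace X]
variable {H : Type*} [NormedAddCommGroup H] [InnerProductSpace ℂ H] [CompleteSpace H]

local notation "⟪" x ", " y "⟫" => @inner ℂ _ _ x y

theorem isAmenable_of_invariant_vector {π : (X → X → ℂ) → (H →L[ℂ] H)}
    (hπ : IsRepresentation π) {ξ : H}
    (hξ : ∀ v : X → X → ℂ, IsPartialTranslation v →
      π v ξ = π (matMul v (matStar v)) ξ)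
    (hne : ξ ≠ 0) : IsAmenable X := by
  classical
  have hnorm : (0:ℝ) < ‖ξ‖ ^ 2 := by
    have := norm_pos_iff.mpr hne
    positivity
  set c : ℂ := ((‖ξ‖ ^ 2 : ℝ) : ℂ) with hc
  have hc0 : c ≠ 0 := by
    simp only [hc, ne_eq, Complex.ofReal_eq_zero]
    exact ne_of_gt hnorm
  refine ⟨fun f => ⟪ξ, π (diag f) ξ⟫ / c, ?_, ?_, ?_, ?_, ?_⟩
  · -- additivity
    intro f g hf hg
    dsimp only
    rw [← diag_add, hπ.map_add _ _ (cuElem_diag hf) (cuElem_diag hg)]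
    simp only [ContinuousLinearMap.add_apply, inner_add_right]
    ring
  · -- scalar multiplication
    intro a f hf
    dsimp only
    rw [← diag_smul, hπ.map_smul _ _ (cuElem_diag hf)]
    simp only [ContinuousLinearMap.smul_apply, inner_smul_right]
    ring
  · -- unital
    dsimp only
    rw [diag_one, hπ.map_one]
    simp only [ContinuousLinearMap.one_apply]
    rw [inner_self_eq_norm_sq_to_K (𝕜 := ℂ), hc]
    have h0 : ((‖ξ‖ : ℝ) : ℂ) ≠ 0 := by exact_mod_cast norm_ne_zero_iff.mpr hne
    push_cast
    exact div_self (pow_ne_zero 2 h0)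
  · -- positivity
    intro f hf hpos
    dsimp only
    set g : X → ℂ := fun x => ((Real.sqrt (f x).re : ℝ) : ℂ) with hg
    have hgb : BddFun g := by
      obtain ⟨M, hM⟩ := hf
      refine ⟨Real.sqrt M, fun x => ?_⟩
      simp only [hg, Complex.norm_real, Real.norm_eq_abs, abs_of_nonneg (Real.sqrt_nonneg _)]
      refine Real.sqrt_le_sqrt ?_
      exact (Complex.re_le_norm (f x)).trans (hM x)
    have hgg : matMul (diag g) (diag g) = diag f := by
      rw [diag_mul_diag]
      have hgf : (fun x => g x * g x) = f := by
        funext x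
        have h1 : g x * g x = ((f x).re : ℂ) := by
          rw [hg]
          push_cast [← Complex.ofReal_mul]
          rw [Real.mul_self_sqrt (hpos x).1]
        have h2 : f x = ((f x).re : ℂ) := by
          apply Complex.ext <;> simp [(hpos x).2]
        rw [h1, ← h2]
      rw [hgf]
    have hstar : matStar (diag g) = diag g := by
      rw [matStar_diag]
      congr 1
      funext x
      simp [hg, Complex.conj_ofReal]
    have hadj : π (diag g) = ContinuousLinearMap.adjoint (π (diag g)) := by
      conv_lhs => rw [← hstar]
      exact hπ.map_star _ (cuElem_diag hgb)
    have moveg : ∀ w : H, ⟪ξ, π (diag g) w⟫ = ⟪π (diag g) ξ, w⟫ := by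
      intro w
      conv_lhs => rw [hadj]
      rw [ContinuousLinearMap.adjoint_inner_right]
    have key : ⟪ξ, π (diag f) ξ⟫ = ((‖π (diag g) ξ‖ ^ 2 : ℝ) : ℂ) := by
      rw [← hgg, hπ.map_mul _ _ (cuElem_diag hgb) (cuElem_diag hgb)]
      simp only [ContinuousLinearMap.mul_apply]
      rw [moveg, inner_self_eq_norm_sq_to_K (𝕜 := ℂ)]
      norm_cast
    rw [key, hc]
    have hcast : ((‖π (diag g) ξ‖ ^ 2 : ℝ) : ℂ) / ((‖ξ‖ ^ 2 : ℝ) : ℂ)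
        = (((‖π (diag g) ξ‖ ^ 2) / (‖ξ‖ ^ 2) : ℝ) : ℂ) := by
      push_cast
      ring
    rw [hcast]
    constructor
    · simp only [Complex.ofReal_re]
      positivity
    · exact Complex.ofReal_im _
  · -- invariance
    intro f hf v hv hsupp
    dsimp only
    set B : X → ℂ := fun x => if x ∈ ptRange v then (1:ℂ) else 0 with hB
    have hBb : BddFun B := ⟨1, fun x => by by_cases h : x ∈ ptRange v <;> simp [hB, h]⟩
    have hBstar : matStar (diag B) = diag B := by
      rw [matStar_diag]
      congr 1
      funext x
      by_cases h : x ∈ ptRange v <;> simp [hB, h]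
    have hPadj : π (diag B) = ContinuousLinearMap.adjoint (π (diag B)) := by
      conv_lhs => rw [← hBstar]
      exact hπ.map_star _ (cuElem_diag hBb)
    have hvB : π v ξ = π (diag B) ξ := by
      rw [hξ v hv, v_mul_star hv]
    have hmulBdd : ∀ (a b : X → ℂ), BddFun a → BddFun b → BddFun (fun x => a x * b x) := by
      rintro a b ⟨Ma, hMa⟩ ⟨Mb, hMb⟩
      refine ⟨|Ma| * |Mb|, fun x => ?_⟩
      rw [norm_mul]
      refine mul_le_mul ((hMa x).trans (le_abs_self Ma)) ((hMb x).trans (le_abs_self Mb))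
        (norm_nonneg _) (abs_nonneg Ma)
    have step1 : ⟪ξ, π (diag (translateFun v f)) ξ⟫ = ⟪ξ, π (diag f) ξ⟫ := by
      rw [← star_diag_mul hv f]
      rw [hπ.map_mul _ _ hv.cuElem_star (cuElem_diag_mul_pt hf hv)]
      rw [hπ.map_mul _ _ (cuElem_diag hf) hv.cuElem]
      simp only [ContinuousLinearMap.mul_apply]
      rw [hπ.map_star _ hv.cuElem, ContinuousLinearMap.adjoint_inner_right]
      rw [hvB]
      have moveP : ∀ w : H, ⟪π (diag B) ξ, w⟫ = ⟪ξ, π (diag B) w⟫ := by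
        intro w
        conv_rhs => rw [hPadj]
        rw [ContinuousLinearMap.adjoint_inner_right]
      rw [moveP]
      have e1 : π (diag f) (π (diag B) ξ) = π (diag (fun x => f x * B x)) ξ := by
        rw [← diag_mul_diag, hπ.map_mul _ _ (cuElem_diag hf) (cuElem_diag hBb)]
        rfl
      have hfB : BddFun (fun x => f x * B x) := hmulBdd _ _ hf hBb
      have e2 : π (diag B) (π (diag (fun x => f x * B x)) ξ)
          = π (diag (fun x => B x * (f x * B x))) ξ := by
        conv_rhs => rw [← diag_mul_diag]
        rw [hπ.map_mul _ _ (cuElem_diag hBb) (cuElem_diag hfB)]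
        rfl
      rw [e1, e2]
      have : (fun x => B x * (f x * B x)) = f := by
        funext x
        by_cases hfx : f x = 0
        · simp [hfx]
        · have : x ∈ ptRange v := hsupp x hfx
          simp [hB, this]
      rw [this]
    rw [step1]

end MeanFromInvariant
/-! ### The regular representation on ℓ² -/

section L2Rep

open scoped NNReal

/-- The Hilbert space `ℓ²(ℕ)`. -/
abbrev H2 : Type := lp (fun _ : ℕ => ℂ) 2

lemma two_toReal : ((2:ℝ≥0∞)).toReal = 2 := by norm_num

lemma rpow_two_toReal (a : ℝ) : a ^ ((2:ℝ≥0∞)).toReal = a ^ 2 := by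
  rw [two_toReal, Real.rpow_two]

lemma memℓp_two_iff (f : ℕ → ℂ) : Memℓp f 2 ↔ Summable (fun i => ‖f i‖ ^ 2) := by
  rw [memℓp_gen_iff (by norm_num : (0:ℝ) < ((2:ℝ≥0∞)).toReal)]
  simp_rw [rpow_two_toReal]

lemma norm_sq_lp (f : H2) : ‖f‖ ^ 2 = ∑' i, ‖(f : ℕ → ℂ) i‖ ^ 2 := by
  have := lp.norm_rpow_eq_tsum (by norm_num : (0:ℝ) < ((2:ℝ≥0∞)).toReal) f
  simp_rw [rpow_two_toReal] at this
  exact this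

lemma ennsum_ne_top_iff (f : ℕ → ℂ) :
    (∑' i, ((‖f i‖₊ : ℝ≥0∞)) ^ 2) ≠ ⊤ ↔ Summable (fun i => ‖f i‖ ^ 2) := by
  have h1 : ∀ i, ((‖f i‖₊ : ℝ≥0∞)) ^ 2 = ((‖f i‖₊ ^ 2 : ℝ≥0) : ℝ≥0∞) := by
    intro i; rw [ENNReal.coe_pow]
  simp_rw [h1]
  rw [ENNReal.tsum_coe_ne_top_iff_summable]
  rw [← NNReal.summable_coe]
  have h2 : ∀ i, ((‖f i‖₊ ^ 2 : ℝ≥0) : ℝ) = ‖f i‖ ^ 2 := by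
    intro i; rw [NNReal.coe_pow, coe_nnnorm]
  simp_rw [h2]

lemma tsum_sq_eq_toReal (f : ℕ → ℂ) :
    ∑' i, ‖f i‖ ^ 2 = (∑' i, ((‖f i‖₊ : ℝ≥0∞)) ^ 2).toReal := by
  rw [ENNReal.tsum_toReal_eq (fun i => ENNReal.pow_ne_top ENNReal.coe_ne_top)]
  refine (tsum_congr (fun i => ?_)).symm
  rw [ENNReal.toReal_pow, ENNReal.coe_toReal, coe_nnnorm]

/-- A matrix over `ℕ` with bounded entries and uniformly finitely supported
rows and columns. -/
def NiceMat (B : ℕ → ℕ → ℂ) : Prop :=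
  ∃ (M : ℝ≥0) (N : ℕ),
    (∀ i j, ‖B i j‖₊ ≤ M) ∧
    (∀ i, ∃ s : Finset ℕ, (∀ j, j ∉ s → B i j = 0) ∧ s.card ≤ N) ∧
    (∀ j, ∃ s : Finset ℕ, (∀ i, i ∉ s → B i j = 0) ∧ s.card ≤ N)

/-- Cauchy–Schwarz for finite sums in `ℝ≥0∞`, with a crude constant. -/
lemma finset_sq_sum_le {ι : Type*} (s : Finset ι) (a : ι → ℝ≥0∞) :
    (∑ j ∈ s, a j) ^ 2 ≤ (2 * s.card) * ∑ j ∈ s, (a j) ^ 2 := by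
  have hb : ∀ j ∈ s, ∀ k ∈ s, a j * a k ≤ a j ^ 2 + a k ^ 2 := by
    intro j _ k _
    rcases le_total (a j) (a k) with h | h
    · calc a j * a k ≤ a k * a k := mul_le_mul_left h _
        _ = a k ^ 2 := (sq (a k)).symm
        _ ≤ a j ^ 2 + a k ^ 2 := le_add_self
    · calc a j * a k ≤ a j * a j := mul_le_mul_right h _
        _ = a j ^ 2 := (sq (a j)).symm
        _ ≤ a j ^ 2 + a k ^ 2 := le_self_add
  calc (∑ j ∈ s, a j) ^ 2 = ∑ j ∈ s, ∑ k ∈ s, a j * a k := by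
        rw [sq, Finset.sum_mul_sum]
    _ ≤ ∑ j ∈ s, ∑ k ∈ s, (a j ^ 2 + a k ^ 2) := by
        refine Finset.sum_le_sum (fun j hj => Finset.sum_le_sum (fun k hk => hb j hj k hk))
    _ = ∑ j ∈ s, (s.card * a j ^ 2 + ∑ k ∈ s, a k ^ 2) := by
        refine Finset.sum_congr rfl (fun j hj => ?_)
        rw [Finset.sum_add_distrib, Finset.sum_const, nsmul_eq_mul]
    _ = (2 * s.card) * ∑ j ∈ s, (a j) ^ 2 := by
        rw [Finset.sum_add_distrib, ← Finset.mul_sum, Finset.sum_const, nsmul_eq_mul]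
        ring

theorem NiceMat.exists_op {B : ℕ → ℕ → ℂ} (hB : NiceMat B) :
    ∃ A : H2 →L[ℂ] H2, ∀ ξ : H2, ∀ i : ℕ, (A ξ : ℕ → ℂ) i = ∑' j, B i j * (ξ : ℕ → ℂ) j := by
  classical
  obtain ⟨M, N, hM, hrow, hcol⟩ := hB
  choose srow hsrow hsrowcard using hrow
  choose scol hscol hscolcard using hcol
  set F : (ℕ → ℂ) → ℕ → ℂ := fun ξ i => ∑' j, B i j * ξ j with hF
  have hFsum : ∀ (ξ : ℕ → ℂ) (i : ℕ), F ξ i = ∑ j ∈ srow i, B i j * ξ j := by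
    intro ξ i
    exact tsum_eq_sum (fun j hj => by rw [hsrow i j hj, zero_mul])
  set C : ℝ≥0∞ := 2 * (N:ℝ≥0∞) ^ 2 * ((M:ℝ≥0∞)) ^ 2 with hC
  have hCtop : C ≠ ⊤ := by
    refine ENNReal.mul_ne_top (ENNReal.mul_ne_top (by norm_num) ?_) ?_
    · exact ENNReal.pow_ne_top (ENNReal.natCast_ne_top N)
    · exact ENNReal.pow_ne_top ENNReal.coe_ne_top
  have key : ∀ ξ : ℕ → ℂ, ∑' i, ((‖F ξ i‖₊ : ℝ≥0∞)) ^ 2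
      ≤ C * ∑' j, ((‖ξ j‖₊ : ℝ≥0∞)) ^ 2 := by
    intro ξ
    set d : ℕ → ℕ → ℝ≥0∞ := fun i j => if B i j ≠ 0 then ((‖ξ j‖₊ : ℝ≥0∞)) ^ 2 else 0
      with hd
    have step1 : ∀ i, ((‖F ξ i‖₊ : ℝ≥0∞)) ^ 2
        ≤ (2 * (N:ℝ≥0∞) * (M:ℝ≥0∞) ^ 2) * ∑' j, d i j := by
      intro i
      set b : ℕ → ℝ≥0∞ := fun j => if B i j ≠ 0 then ((‖ξ j‖₊ : ℝ≥0∞)) else 0 with hbdef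
      have h1 : ((‖F ξ i‖₊ : ℝ≥0∞)) ≤ (M:ℝ≥0∞) * ∑ j ∈ srow i, b j := by
        rw [hFsum]
        calc ((‖∑ j ∈ srow i, B i j * ξ j‖₊ : ℝ≥0∞))
            ≤ ∑ j ∈ srow i, ((‖B i j * ξ j‖₊ : ℝ≥0∞)) := by
              rw [← ENNReal.coe_finset_sum]
              exact_mod_cast nnnorm_sum_le (srow i) (fun j => B i j * ξ j)
          _ ≤ ∑ j ∈ srow i, (M:ℝ≥0∞) * b j := by
              refine Finset.sum_le_sum (fun j hj => ?_)
              by_cases hz : B i j = 0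
              · simp [hz, hbdef]
              · rw [hbdef]
                simp only [hz, ne_eq, not_false_iff, if_true]
                rw [nnnorm_mul, ENNReal.coe_mul]
                exact mul_le_mul_left (ENNReal.coe_le_coe.mpr (hM i j)) _
          _ = (M:ℝ≥0∞) * ∑ j ∈ srow i, b j := by rw [Finset.mul_sum]
      have h2 : ((‖F ξ i‖₊ : ℝ≥0∞)) ^ 2 ≤ (M:ℝ≥0∞) ^ 2 * (∑ j ∈ srow i, b j) ^ 2 := by
        rw [← mul_pow]
        exact pow_le_pow_left' h1 2
      have h3 : (∑ j ∈ srow i, b j) ^ 2 ≤ (2 * (N:ℝ≥0∞)) * ∑ j ∈ srow i, (b j) ^ 2 := by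
        refine (finset_sq_sum_le (srow i) b).trans ?_
        refine mul_le_mul_left ?_ _
        refine mul_le_mul_right ?_ _
        exact_mod_cast Nat.cast_le.mpr (hsrowcard i)
      have h4 : ∀ j, (b j) ^ 2 = d i j := by
        intro j
        rw [hbdef, hd]
        by_cases hz : B i j = 0 <;> simp [hz]
      have h5 : ∑ j ∈ srow i, (b j) ^ 2 ≤ ∑' j, d i j := by
        simp_rw [h4]
        exact ENNReal.sum_le_tsum (srow i)
      calc ((‖F ξ i‖₊ : ℝ≥0∞)) ^ 2 ≤ (M:ℝ≥0∞) ^ 2 * (∑ j ∈ srow i, b j) ^ 2 := h2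
        _ ≤ (M:ℝ≥0∞) ^ 2 * ((2 * (N:ℝ≥0∞)) * ∑ j ∈ srow i, (b j) ^ 2) :=
            mul_le_mul_right h3 _
        _ ≤ (M:ℝ≥0∞) ^ 2 * ((2 * (N:ℝ≥0∞)) * ∑' j, d i j) :=
            mul_le_mul_right (mul_le_mul_right h5 _) _
        _ = (2 * (N:ℝ≥0∞) * (M:ℝ≥0∞) ^ 2) * ∑' j, d i j := by ring
    have step3 : ∀ j, ∑' i, d i j ≤ (N:ℝ≥0∞) * ((‖ξ j‖₊ : ℝ≥0∞)) ^ 2 := by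
      intro j
      rw [tsum_eq_sum (s := scol j) (fun i hi => by simp [hd, hscol j i hi])]
      calc ∑ i ∈ scol j, d i j ≤ ∑ i ∈ scol j, ((‖ξ j‖₊ : ℝ≥0∞)) ^ 2 := by
            refine Finset.sum_le_sum (fun i _ => ?_)
            by_cases hz : B i j = 0 <;> simp [hd, hz]
        _ = (scol j).card * ((‖ξ j‖₊ : ℝ≥0∞)) ^ 2 := by
            rw [Finset.sum_const, nsmul_eq_mul]
        _ ≤ (N:ℝ≥0∞) * ((‖ξ j‖₊ : ℝ≥0∞)) ^ 2 := by
            refine mul_le_mul_left ?_ _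
            exact_mod_cast Nat.cast_le.mpr (hscolcard j)
    calc ∑' i, ((‖F ξ i‖₊ : ℝ≥0∞)) ^ 2
        ≤ ∑' i, (2 * (N:ℝ≥0∞) * (M:ℝ≥0∞) ^ 2) * ∑' j, d i j :=
          ENNReal.tsum_le_tsum step1
      _ = (2 * (N:ℝ≥0∞) * (M:ℝ≥0∞) ^ 2) * ∑' i, ∑' j, d i j := ENNReal.tsum_mul_left
      _ = (2 * (N:ℝ≥0∞) * (M:ℝ≥0∞) ^ 2) * ∑' j, ∑' i, d i j := by rw [ENNReal.tsum_comm]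
      _ ≤ (2 * (N:ℝ≥0∞) * (M:ℝ≥0∞) ^ 2) * ∑' j, (N:ℝ≥0∞) * ((‖ξ j‖₊ : ℝ≥0∞)) ^ 2 :=
          mul_le_mul_right (ENNReal.tsum_le_tsum step3) _
      _ = (2 * (N:ℝ≥0∞) * (M:ℝ≥0∞) ^ 2) * ((N:ℝ≥0∞) * ∑' j, ((‖ξ j‖₊ : ℝ≥0∞)) ^ 2) := by
          rw [ENNReal.tsum_mul_left]
      _ = C * ∑' j, ((‖ξ j‖₊ : ℝ≥0∞)) ^ 2 := by rw [hC]; ring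
  have hfin : ∀ ξ : H2, (∑' j, ((‖(ξ : ℕ → ℂ) j‖₊ : ℝ≥0∞)) ^ 2) ≠ ⊤ := by
    intro ξ
    rw [ennsum_ne_top_iff]
    exact (memℓp_two_iff _).mp (lp.memℓp ξ)
  have hmem : ∀ ξ : H2, Memℓp (F ξ) 2 := by
    intro ξ
    rw [memℓp_two_iff, ← ennsum_ne_top_iff]
    exact ne_top_of_le_ne_top (ENNReal.mul_ne_top hCtop (hfin ξ)) (key ξ)
  -- the underlying linear map
  set L : H2 →ₗ[ℂ] H2 :=
    { toFun := fun ξ => (⟨F ξ, hmem ξ⟩ : H2)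
      map_add' := by
        intro ξ η
        apply lp.ext
        funext i
        have : ∀ j, (((ξ + η : H2)) : ℕ → ℂ) j = (ξ : ℕ → ℂ) j + (η : ℕ → ℂ) j := by
          intro j
          rw [lp.coeFn_add]
          rfl
        show F (((ξ + η : H2)) : ℕ → ℂ) i = F (ξ : ℕ → ℂ) i + F (η : ℕ → ℂ) i
        rw [hFsum, hFsum, hFsum, ← Finset.sum_add_distrib]
        refine Finset.sum_congr rfl (fun j _ => ?_)
        rw [this j]
        ring
      map_smul' := by
        intro c ξ
        apply lp.ext
        funext i
        have : ∀ j, (((c • ξ : H2)) : ℕ → ℂ) j = c * (ξ : ℕ → ℂ) j := by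
          intro j
          rw [lp.coeFn_smul]
          rfl
        show F (((c • ξ : H2)) : ℕ → ℂ) i = c * F (ξ : ℕ → ℂ) i
        rw [hFsum, hFsum, Finset.mul_sum]
        refine Finset.sum_congr rfl (fun j _ => ?_)
        rw [this j]
        ring } with hL
  have hbound : ∀ ξ : H2, ‖L ξ‖ ≤ Real.sqrt C.toReal * ‖ξ‖ := by
    intro ξ
    have hsq : ‖L ξ‖ ^ 2 ≤ (Real.sqrt C.toReal * ‖ξ‖) ^ 2 := by
      rw [norm_sq_lp]
      have lhs_eq : ∑' i, ‖(L ξ : ℕ → ℂ) i‖ ^ 2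
          = (∑' i, ((‖F (ξ : ℕ → ℂ) i‖₊ : ℝ≥0∞)) ^ 2).toReal := tsum_sq_eq_toReal _
      have rhs_eq : (Real.sqrt C.toReal * ‖ξ‖) ^ 2
          = C.toReal * ‖ξ‖ ^ 2 := by
        rw [mul_pow, Real.sq_sqrt ENNReal.toReal_nonneg]
      rw [lhs_eq, rhs_eq, norm_sq_lp, tsum_sq_eq_toReal]
      rw [← ENNReal.toReal_mul]
      refine ENNReal.toReal_mono (ENNReal.mul_ne_top hCtop (hfin ξ)) (key _)
    have h1 : (0:ℝ) ≤ Real.sqrt C.toReal * ‖ξ‖ :=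
      mul_nonneg (Real.sqrt_nonneg _) (norm_nonneg _)
    calc ‖L ξ‖ = Real.sqrt (‖L ξ‖ ^ 2) := by rw [Real.sqrt_sq (norm_nonneg _)]
      _ ≤ Real.sqrt ((Real.sqrt C.toReal * ‖ξ‖) ^ 2) := Real.sqrt_le_sqrt hsq
      _ = Real.sqrt C.toReal * ‖ξ‖ := Real.sqrt_sq h1
  refine ⟨LinearMap.mkContinuous L (Real.sqrt C.toReal) hbound, fun ξ i => rfl⟩

end L2Rep
section Rep

open scoped NNReal

lemma NiceMat.summable_row {B : ℕ → ℕ → ℂ} (hB : NiceMat B) (ξ : ℕ → ℂ) (i : ℕ) :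
    Summable (fun j => B i j * ξ j) := by
  obtain ⟨M, N, hM, hrow, hcol⟩ := hB
  obtain ⟨s, hs, -⟩ := hrow i
  exact summable_of_ne_finset_zero (fun j hj => by rw [hs j hj, zero_mul])

lemma matMul_row_eq_sum {A B : ℕ → ℕ → ℂ} {i : ℕ} {sA : Finset ℕ}
    (hsA : ∀ k, k ∉ sA → A i k = 0) (j : ℕ) :
    matMul A B i j = ∑ k ∈ sA, A i k * B k j :=
  tsum_eq_sum (fun k hk => by rw [hsA k hk, zero_mul])

lemma niceMat_matOne : NiceMat (matOne : ℕ → ℕ → ℂ) := by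
  refine ⟨1, 1, ?_, ?_, ?_⟩
  · intro i j
    by_cases h : i = j <;> simp [matOne, h]
  · intro i
    refine ⟨{i}, fun j hj => ?_, by simp⟩
    have : i ≠ j := fun h => hj (by simp [h])
    simp [matOne, this]
  · intro j
    refine ⟨{j}, fun i hi => ?_, by simp⟩
    have : i ≠ j := fun h => hi (by simp [h])
    simp [matOne, this]

lemma NiceMat.star {A : ℕ → ℕ → ℂ} (hA : NiceMat A) : NiceMat (matStar A) := by
  obtain ⟨M, N, hM, hrow, hcol⟩ := hA
  refine ⟨M, N, ?_, ?_, ?_⟩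
  · intro i j
    simp only [matStar]
    rw [RCLike.nnnorm_conj]
    exact hM j i
  · intro i
    obtain ⟨s, hs, hc⟩ := hcol i
    exact ⟨s, fun j hj => by simp [matStar, hs j hj], hc⟩
  · intro j
    obtain ⟨s, hs, hc⟩ := hrow j
    exact ⟨s, fun i hi => by simp [matStar, hs i hi], hc⟩

lemma NiceMat.mul {A B : ℕ → ℕ → ℂ} (hA : NiceMat A) (hB : NiceMat B) :
    NiceMat (matMul A B) := by
  classical
  obtain ⟨MA, NA, hMA, hArow, hAcol⟩ := hA
  obtain ⟨MB, NB, hMB, hBrow, hBcol⟩ := hB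
  choose sAr hsAr hsArc using hArow
  choose sAc hsAc hsAcc using hAcol
  choose sBr hsBr hsBrc using hBrow
  choose sBc hsBc hsBcc using hBcol
  refine ⟨NA * (MA * MB), max (NA * NB) (NB * NA), ?_, ?_, ?_⟩
  · intro i j
    rw [matMul_row_eq_sum (hsAr i) j]
    calc ‖∑ k ∈ sAr i, A i k * B k j‖₊ ≤ ∑ k ∈ sAr i, ‖A i k * B k j‖₊ :=
          nnnorm_sum_le _ _
      _ ≤ ∑ _k ∈ sAr i, MA * MB := by
          refine Finset.sum_le_sum (fun k _ => ?_)
          rw [nnnorm_mul]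
          exact mul_le_mul' (hMA i k) (hMB k j)
      _ = (sAr i).card • (MA * MB) := by rw [Finset.sum_const]
      _ ≤ NA • (MA * MB) := smul_le_smul_of_nonneg_right (hsArc i) zero_le
      _ = (NA : ℝ≥0) * (MA * MB) := by rw [nsmul_eq_mul]
  · intro i
    refine ⟨(sAr i).biUnion sBr, fun j hj => ?_, ?_⟩
    · rw [matMul_row_eq_sum (hsAr i) j]
      refine Finset.sum_eq_zero (fun k hk => ?_)
      have : j ∉ sBr k := fun hmem => hj (Finset.mem_biUnion.mpr ⟨k, hk, hmem⟩)
      rw [hsBr k j this, mul_zero]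
    · refine le_trans (Finset.card_biUnion_le_card_mul _ _ NB (fun k _ => hsBrc k)) ?_
      exact le_trans (Nat.mul_le_mul_right NB (hsArc i)) (le_max_left _ _)
  · intro j
    refine ⟨(sBc j).biUnion sAc, fun i hi => ?_, ?_⟩
    · rw [matMul_row_eq_sum (hsAr i) j]
      refine Finset.sum_eq_zero (fun k hk => ?_)
      by_cases hBkj : B k j = 0
      · rw [hBkj, mul_zero]
      · have hk1 : k ∈ sBc j := by
          by_contra hcon
          exact hBkj (hsBc j k hcon)
        have : i ∉ sAc k := fun hmem => hi (Finset.mem_biUnion.mpr ⟨k, hk1, hmem⟩)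
        rw [hsAc k i this, zero_mul]
    · refine le_trans (Finset.card_biUnion_le_card_mul _ _ NA (fun k _ => hsAcc k)) ?_
      exact le_trans (Nat.mul_le_mul_right NA (hsBcc j)) (le_max_right _ _)

variable {X : Type*}

/-- Conjugating a matrix over `X` to a matrix over `ℕ` via an equivalence. -/
def cnj (e : X ≃ ℕ) (T : X → X → ℂ) : ℕ → ℕ → ℂ := fun i j => T (e.symm i) (e.symm j)

lemma cnj_matMul (e : X ≃ ℕ) (T S : X → X → ℂ) :
    cnj e (matMul T S) = matMul (cnj e T) (cnj e S) := by
  funext i j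
  exact (Equiv.tsum_eq e.symm (fun z => T (e.symm i) z * S z (e.symm j))).symm

lemma cnj_matStar (e : X ≃ ℕ) (T : X → X → ℂ) :
    cnj e (matStar T) = matStar (cnj e T) := rfl

lemma cnj_add (e : X ≃ ℕ) (T S : X → X → ℂ) :
    cnj e (T + S) = cnj e T + cnj e S := rfl

lemma cnj_smul (e : X ≃ ℕ) (c : ℂ) (T : X → X → ℂ) :
    cnj e (c • T) = c • cnj e T := rfl

lemma cnj_matOne (e : X ≃ ℕ) : cnj e (matOne : X → X → ℂ) = matOne := by
  funext i j
  by_cases h : i = j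
  · simp [cnj, matOne, h]
  · have h2 : e.symm i ≠ e.symm j := fun hh => h (e.symm.injective hh)
    simp [cnj, matOne, h, h2]

section Metric
variable [EMetricSpace X]

lemma niceMat_cnj (e : X ≃ ℕ) (hBG : BoundedGeometry X)
    {T : X → X → ℂ} (hT : CuElem T) : NiceMat (cnj e T) := by
  classical
  obtain ⟨⟨M, hM⟩, R, hR, hsub⟩ := hT
  obtain ⟨N, hN⟩ := hBG R hR
  refine ⟨M.toNNReal, N, ?_, ?_, ?_⟩
  · intro i j
    have h1 : ‖T (e.symm i) (e.symm j)‖ ≤ (M.toNNReal : ℝ) := by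
      have h2 := hM (e.symm i) (e.symm j)
      exact h2.trans (Real.le_coe_toNNReal M)
    exact_mod_cast h1
  · intro i
    refine ⟨((hN (e.symm i)).1.toFinset).image e, fun j hj => ?_, ?_⟩
    · by_contra hne
      have hball : edist (e.symm i) (e.symm j) ≤ R :=
        hsub (show ((e.symm i, e.symm j) : X × X) ∈ matSupport T from hne)
      refine hj (Finset.mem_image.mpr ⟨e.symm j, ?_, by simp⟩)
      rw [Set.Finite.mem_toFinset]
      exact hball
    · refine le_trans Finset.card_image_le ?_
      rw [← Set.ncard_eq_toFinset_card _ (hN (e.symm i)).1]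
      exact (hN (e.symm i)).2
  · intro j
    refine ⟨((hN (e.symm j)).1.toFinset).image e, fun i hi => ?_, ?_⟩
    · by_contra hne
      have hball : edist (e.symm i) (e.symm j) ≤ R :=
        hsub (show ((e.symm i, e.symm j) : X × X) ∈ matSupport T from hne)
      refine hi (Finset.mem_image.mpr ⟨e.symm i, ?_, by simp⟩)
      rw [Set.Finite.mem_toFinset]
      show edist (e.symm j) (e.symm i) ≤ R
      rwa [edist_comm]
    · refine le_trans Finset.card_image_le ?_
      rw [← Set.ncard_eq_toFinset_card _ (hN (e.symm j)).1]
      exact (hN (e.symm j)).2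

/-- The regular representation of `ℂ_u[X]` on `ℓ²(ℕ)` via the identification `e`. -/
def repPi (e : X ≃ ℕ) (T : X → X → ℂ) : H2 →L[ℂ] H2 :=
  if h : NiceMat (cnj e T) then h.exists_op.choose else 0

lemma repPi_apply {e : X ≃ ℕ} {T : X → X → ℂ} (h : NiceMat (cnj e T)) (ξ : H2) (i : ℕ) :
    ((repPi e T ξ : H2) : ℕ → ℂ) i = ∑' j, cnj e T i j * (ξ : ℕ → ℂ) j := by
  simp only [repPi, dif_pos h]
  exact h.exists_op.choose_spec ξ i

local notation "⟪" x ", " y "⟫" => @inner ℂ _ _ x y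

theorem isRep_repPi (e : X ≃ ℕ) (hBG : BoundedGeometry X) :
    IsRepresentation (repPi e) := by
  have hone : NiceMat (cnj e (matOne : X → X → ℂ)) := by
    rw [cnj_matOne]; exact niceMat_matOne
  constructor
  · -- map_one
    refine ContinuousLinearMap.ext (fun ξ => lp.ext (funext (fun i => ?_)))
    rw [repPi_apply hone]
    have : ∀ j, cnj e (matOne : X → X → ℂ) i j * (ξ : ℕ → ℂ) j
        = (matOne : ℕ → ℕ → ℂ) i j * (ξ : ℕ → ℂ) j := by
      intro j; rw [cnj_matOne]
    rw [tsum_congr this]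
    rw [tsum_eq_single i (fun j hj => by simp [matOne, Ne.symm hj])]
    simp [matOne]
  · -- map_add
    intro T S hT hS
    have hT' := niceMat_cnj e hBG hT
    have hS' := niceMat_cnj e hBG hS
    have hTS' : NiceMat (cnj e (T + S)) := by
      rw [cnj_add]
      obtain ⟨MT, NT, h1, h2, h3⟩ := hT'
      obtain ⟨MS, NS, g1, g2, g3⟩ := hS'
      refine ⟨MT + MS, NT + NS, ?_, ?_, ?_⟩
      · intro i j
        refine le_trans (nnnorm_add_le _ _) (add_le_add (h1 i j) (g1 i j))
      · intro i
        obtain ⟨s1, hs1, hc1⟩ := h2 i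
        obtain ⟨s2, hs2, hc2⟩ := g2 i
        refine ⟨s1 ∪ s2, fun j hj => ?_, ?_⟩
        · have := hs1 j (fun hm => hj (Finset.mem_union_left _ hm))
          have := hs2 j (fun hm => hj (Finset.mem_union_right _ hm))
          simp_all [Pi.add_apply]
        · exact le_trans (Finset.card_union_le _ _) (add_le_add hc1 hc2)
      · intro j
        obtain ⟨s1, hs1, hc1⟩ := h3 j
        obtain ⟨s2, hs2, hc2⟩ := g3 j
        refine ⟨s1 ∪ s2, fun i hi => ?_, ?_⟩
        · have := hs1 i (fun hm => hi (Finset.mem_union_left _ hm))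
          have := hs2 i (fun hm => hi (Finset.mem_union_right _ hm))
          simp_all [Pi.add_apply]
        · exact le_trans (Finset.card_union_le _ _) (add_le_add hc1 hc2)
    refine ContinuousLinearMap.ext (fun ξ => lp.ext (funext (fun i => ?_)))
    rw [ContinuousLinearMap.add_apply, lp.coeFn_add, Pi.add_apply]
    rw [repPi_apply hTS', repPi_apply hT', repPi_apply hS']
    rw [cnj_add]
    have : ∀ j, (cnj e T + cnj e S) i j * (ξ : ℕ → ℂ) j
        = cnj e T i j * (ξ : ℕ → ℂ) j + cnj e S i j * (ξ : ℕ → ℂ) j := by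
      intro j
      rw [Pi.add_apply, Pi.add_apply]
      ring
    rw [tsum_congr this]
    exact Summable.tsum_add (hT'.summable_row _ i) (hS'.summable_row _ i)
  · -- map_smul
    intro c T hT
    have hT' := niceMat_cnj e hBG hT
    have hcT' : NiceMat (cnj e (c • T)) := by
      rw [cnj_smul]
      obtain ⟨MT, NT, h1, h2, h3⟩ := hT'
      refine ⟨‖c‖₊ * MT, NT, ?_, ?_, ?_⟩
      · intro i j
        simp only [Pi.smul_apply, smul_eq_mul, nnnorm_mul]
        exact mul_le_mul_right (h1 i j) _
      · intro i
        obtain ⟨s, hs, hc1⟩ := h2 i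
        exact ⟨s, fun j hj => by simp [Pi.smul_apply, hs j hj], hc1⟩
      · intro j
        obtain ⟨s, hs, hc1⟩ := h3 j
        exact ⟨s, fun i hi => by simp [Pi.smul_apply, hs i hi], hc1⟩
    refine ContinuousLinearMap.ext (fun ξ => lp.ext (funext (fun i => ?_)))
    rw [ContinuousLinearMap.smul_apply, lp.coeFn_smul, Pi.smul_apply]
    rw [repPi_apply hcT', repPi_apply hT']
    rw [cnj_smul]
    have : ∀ j, (c • cnj e T) i j * (ξ : ℕ → ℂ) j
        = c * (cnj e T i j * (ξ : ℕ → ℂ) j) := by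
      intro j
      simp only [Pi.smul_apply, smul_eq_mul]
      ring
    rw [tsum_congr this, tsum_mul_left]
    rfl
  · -- map_mul
    intro T S hT hS
    have hT' := niceMat_cnj e hBG hT
    have hS' := niceMat_cnj e hBG hS
    have hTS' : NiceMat (cnj e (matMul T S)) := by
      rw [cnj_matMul]; exact hT'.mul hS'
    refine ContinuousLinearMap.ext (fun ξ => lp.ext (funext (fun i => ?_)))
    rw [ContinuousLinearMap.mul_apply]
    rw [repPi_apply hTS', repPi_apply hT']
    set A := cnj e T with hA
    set B := cnj e S with hB
    obtain ⟨MA, NA, hMA, hArow, hAcol⟩ := hT'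
    obtain ⟨MB, NB, hMB, hBrow, hBcol⟩ := hS'
    obtain ⟨sA, hsA, -⟩ := hArow i
    choose sB hsB hsBc using hBrow
    set K := sA.biUnion sB with hK
    have lhs_eq : ∑' j, cnj e (matMul T S) i j * (ξ : ℕ → ℂ) j
        = ∑ j ∈ K, ∑ k ∈ sA, A i k * B k j * (ξ : ℕ → ℂ) j := by
      rw [cnj_matMul, ← hA, ← hB]
      have h1 : ∀ j, matMul A B i j * (ξ : ℕ → ℂ) j
          = ∑ k ∈ sA, A i k * B k j * (ξ : ℕ → ℂ) j := by
        intro j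
        rw [matMul_row_eq_sum hsA j, Finset.sum_mul]
      rw [tsum_congr h1]
      refine tsum_eq_sum (fun j hj => ?_)
      refine Finset.sum_eq_zero (fun k hk => ?_)
      have : j ∉ sB k := fun hm => hj (Finset.mem_biUnion.mpr ⟨k, hk, hm⟩)
      rw [hsB k j this, mul_zero, zero_mul]
    have rhs_eq : ∑' k, A i k * ((repPi e S ξ : H2) : ℕ → ℂ) k
        = ∑ k ∈ sA, ∑ j ∈ K, A i k * (B k j * (ξ : ℕ → ℂ) j) := by
      have h2 : ∀ k, A i k * ((repPi e S ξ : H2) : ℕ → ℂ) k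
          = A i k * ∑' j, B k j * (ξ : ℕ → ℂ) j := by
        intro k
        rw [repPi_apply (by rw [← hB] at *; exact ⟨MB, NB, hMB, fun i' => ⟨sB i', hsB i', hsBc i'⟩, hBcol⟩)]
      rw [tsum_congr h2]
      rw [tsum_eq_sum (s := sA) (fun k hk => by rw [hsA k hk, zero_mul])]
      refine Finset.sum_congr rfl (fun k hk => ?_)
      rw [tsum_eq_sum (s := K) (fun j hj => ?_), Finset.mul_sum]
      have : j ∉ sB k := fun hm => hj (Finset.mem_biUnion.mpr ⟨k, hk, hm⟩)
      rw [hsB k j this, zero_mul]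
    rw [lhs_eq, rhs_eq, Finset.sum_comm]
    refine Finset.sum_congr rfl (fun j _ => Finset.sum_congr rfl (fun k _ => by ring))
  · -- map_star
    intro T hT
    have hT' := niceMat_cnj e hBG hT
    have hS' : NiceMat (cnj e (matStar T)) := by
      rw [cnj_matStar]; exact hT'.star
    set A := cnj e T with hA
    rw [ContinuousLinearMap.eq_adjoint_iff]
    have hsingle : ∀ (j₀ : ℕ) (a : ℂ) (η : H2),
        ⟪repPi e (matStar T) (lp.single 2 j₀ a), η⟫ = ⟪lp.single 2 j₀ a, repPi e T η⟫ := by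
      intro j₀ a η
      obtain ⟨MA, NA, hMA, hArow, hAcol⟩ := hT'
      obtain ⟨sT, hsT, -⟩ := hArow j₀
      have coord : ∀ i, ((repPi e (matStar T) (lp.single 2 j₀ a) : H2) : ℕ → ℂ) i
          = (starRingEnd ℂ) (A j₀ i) * a := by
        intro i
        rw [repPi_apply hS', cnj_matStar, ← hA]
        rw [tsum_eq_single j₀ (fun k hk => by
          simp [lp.single_apply, hk])]
        simp only [lp.single_apply_self]
        rfl
      rw [lp.inner_eq_tsum]
      have h3 : ∀ i, ⟪((repPi e (matStar T) (lp.single 2 j₀ a) : H2) : ℕ → ℂ) i,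
          (η : ℕ → ℂ) i⟫ = A j₀ i * ((starRingEnd ℂ) a * (η : ℕ → ℂ) i) := by
        intro i
        rw [RCLike.inner_apply, coord i, map_mul, Complex.conj_conj]
        ring
      rw [tsum_congr h3]
      rw [tsum_eq_sum (s := sT) (fun i hi => by rw [hsT i hi, zero_mul])]
      rw [lp.inner_single_left, RCLike.inner_apply]
      rw [repPi_apply (by rw [← hA]; exact ⟨MA, NA, hMA, hArow, hAcol⟩)]
      rw [← hA]
      rw [tsum_eq_sum (s := sT) (fun k hk => by rw [hsT k hk, zero_mul]), Finset.sum_mul]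
      refine Finset.sum_congr rfl (fun k _ => by ring)
    intro ξ η
    set G1 : H2 →+ ℂ := AddMonoidHom.mk' (fun ζ => ⟪repPi e (matStar T) ζ, η⟫)
      (fun x y => by simp only [map_add, inner_add_left]) with hG1
    set G2 : H2 →+ ℂ := AddMonoidHom.mk' (fun ζ => ⟪ζ, repPi e T η⟫)
      (fun x y => by simp only [inner_add_left]) with hG2
    have hc1 : Continuous G1 :=
      Continuous.inner ((repPi e (matStar T)).continuous) continuous_const
    have hc2 : Continuous G2 :=
      Continuous.inner continuous_id continuous_const
    have hsum := lp.hasSum_single (E := fun _ : ℕ => ℂ) (by norm_num) ξ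
    have s1 := hsum.map G1 hc1
    have s2 := hsum.map G2 hc2
    have heq : (⇑G1 ∘ fun i => lp.single 2 i ((ξ : ℕ → ℂ) i))
        = (⇑G2 ∘ fun i => lp.single 2 i ((ξ : ℕ → ℂ) i)) := by
      funext i
      exact hsingle i ((ξ : ℕ → ℂ) i) η
    rw [heq] at s1
    exact s1.unique s2

end Metric

end Rep
section InvBot

variable {X : Type*} [EMetricSpace X]

/-- The transposition of `x` and `y` as a partial translation matrix. -/
def swapMat (x y : X) : X → X → ℂ :=
  fun a b => if (a = x ∧ b = y) ∨ (a = y ∧ b = x) then 1 else 0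

lemma isPT_swapMat {x y : X} (hxy : edist x y < ⊤) :
    IsPartialTranslation (swapMat x y) := by
  refine ⟨?_, ?_, ?_, ?_⟩
  · intro a b
    by_cases h : (a = x ∧ b = y) ∨ (a = y ∧ b = x) <;> simp [swapMat, h]
  · intro a b b' hb hb'
    have h1 : (a = x ∧ b = y) ∨ (a = y ∧ b = x) := by
      by_contra h
      simp only [swapMat] at hb
      rw [if_neg h] at hb
      exact one_ne_zero hb.symm
    have h2 : (a = x ∧ b' = y) ∨ (a = y ∧ b' = x) := by
      by_contra h
      simp only [swapMat] at hb'
      rw [if_neg h] at hb'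
      exact one_ne_zero hb'.symm
    rcases h1 with ⟨h1a, h1b⟩ | ⟨h1a, h1b⟩ <;> rcases h2 with ⟨h2a, h2b⟩ | ⟨h2a, h2b⟩ <;>
      subst_vars <;> rfl
  · intro a a' b ha ha'
    have h1 : (a = x ∧ b = y) ∨ (a = y ∧ b = x) := by
      by_contra h
      simp only [swapMat] at ha
      rw [if_neg h] at ha
      exact one_ne_zero ha.symm
    have h2 : (a' = x ∧ b = y) ∨ (a' = y ∧ b = x) := by
      by_contra h
      simp only [swapMat] at ha'
      rw [if_neg h] at ha'
      exact one_ne_zero ha'.symm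
    rcases h1 with ⟨h1a, h1b⟩ | ⟨h1a, h1b⟩ <;> rcases h2 with ⟨h2a, h2b⟩ | ⟨h2a, h2b⟩ <;>
      subst_vars <;> first | rfl | (exfalso; exact absurd rfl (by assumption)) 
  · refine ⟨edist x y, hxy, fun p hp => ?_⟩
    have h1 : (p.1 = x ∧ p.2 = y) ∨ (p.1 = y ∧ p.2 = x) := by
      by_contra h
      exact hp (if_neg h)
    rcases h1 with ⟨h1a, h1b⟩ | ⟨h1a, h1b⟩
    · simp [Tube, h1a, h1b]
    · simp [Tube, h1a, h1b, edist_comm]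

lemma mem_ptRange_swapMat {x y : X} : x ∈ ptRange (swapMat x y) := by
  exact ⟨y, by simp [swapMat]⟩

lemma invariant_bot (e : X ≃ ℕ) (hBG : BoundedGeometry X) [Infinite X]
    (hcc : ∀ x y : X, edist x y < ⊤) :
    invariantSubmodule (repPi e) = ⊥ := by
  rw [Submodule.eq_bot_iff]
  intro ξ hξ
  have hconst : ∀ i j : ℕ, (ξ : ℕ → ℂ) i = (ξ : ℕ → ℂ) j := by
    intro i j
    by_cases hij : i = j
    · rw [hij]
    · set x := e.symm i with hx
      set y := e.symm j with hy
      have hxy : x ≠ y := by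
        rw [hx, hy]
        intro h
        exact hij (by simpa using congrArg e h)
      set v := swapMat x y with hvdef
      have hv : IsPartialTranslation v := isPT_swapMat (hcc x y)
      have hmain := hξ v hv
      have hNv : NiceMat (cnj e v) := niceMat_cnj e hBG hv.cuElem
      set g : X → ℂ := fun a => if a ∈ ptRange v then (1:ℂ) else 0 with hg
      have hgB : BddFun g := ⟨1, fun a => by by_cases h : a ∈ ptRange v <;> simp [hg, h]⟩
      have hNd : NiceMat (cnj e (matMul v (matStar v))) := by
        rw [v_mul_star hv, ← hg]
        exact niceMat_cnj e hBG (cuElem_diag hgB)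
      have lhs : ((repPi e v ξ : H2) : ℕ → ℂ) i = (ξ : ℕ → ℂ) j := by
        rw [repPi_apply hNv]
        rw [tsum_eq_single j (fun k hk => ?_)]
        · have : cnj e v i j = 1 := by
            simp [cnj, hvdef, swapMat, ← hx, ← hy]
          rw [this, one_mul]
        · have : cnj e v i k = 0 := by
            have h1 : e.symm k ≠ y := by
              rw [hy]
              intro h
              exact hk (by simpa using congrArg e h)
            simp only [cnj, hvdef, swapMat, ← hx]
            rw [if_neg]
            rintro (⟨-, h2⟩ | ⟨h2, -⟩)
            · exact h1 h2
            · exact hxy h2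
          rw [this, zero_mul]
      have rhs : ((repPi e (matMul v (matStar v)) ξ : H2) : ℕ → ℂ) i = (ξ : ℕ → ℂ) i := by
        rw [repPi_apply hNd]
        have hrw : ∀ k, cnj e (matMul v (matStar v)) i k = cnj e (diag g) i k := by
          intro k
          rw [v_mul_star hv]
        rw [tsum_congr (fun k => by rw [hrw k])]
        have hxpt : x ∈ ptRange v := by rw [hvdef]; exact mem_ptRange_swapMat
        rw [tsum_eq_single i (fun k hk => ?_)]
        · have : cnj e (diag g) i i = 1 := by
            simp [cnj, diag, hg, ← hx, hxpt]
          rw [this, one_mul]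
        · have : cnj e (diag g) i k = 0 := by
            have h1 : e.symm i ≠ e.symm k := by
              intro h
              exact hk (by simpa using (congrArg e h).symm)
            simp [cnj, diag, h1]
          rw [this, zero_mul]
      have := congrArg (fun z : H2 => (z : ℕ → ℂ) i) hmain
      simp only at this
      rw [lhs, rhs] at this
      exact this.symm
  -- a constant ℓ² function is zero
  have hsum : Summable (fun i => ‖(ξ : ℕ → ℂ) i‖ ^ 2) := (memℓp_two_iff _).mp (lp.memℓp ξ)
  have hzero : (ξ : ℕ → ℂ) 0 = 0 := by
    by_contra hne
    have hpos : 0 < ‖(ξ : ℕ → ℂ) 0‖ ^ 2 := by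
      have : 0 < ‖(ξ : ℕ → ℂ) 0‖ := norm_pos_iff.mpr hne
      positivity
    have hcongr : (fun i : ℕ => ‖(ξ : ℕ → ℂ) i‖ ^ 2) = fun _ => ‖(ξ : ℕ → ℂ) 0‖ ^ 2 := by
      funext i
      rw [hconst i 0]
    rw [hcongr] at hsum
    have := hsum.tendsto_atTop_zero
    have h2 : Filter.Tendsto (fun _ : ℕ => ‖(ξ : ℕ → ℂ) 0‖ ^ 2) Filter.atTop
        (nhds (‖(ξ : ℕ → ℂ) 0‖ ^ 2)) := tendsto_const_nhds
    have := tendsto_nhds_unique this h2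
    exact absurd this.symm (ne_of_gt hpos)
  apply lp.ext
  funext i
  have : (ξ : ℕ → ℂ) i = (ξ : ℕ → ℂ) 0 := hconst i 0
  rw [this, hzero]
  rfl

end InvBot
section Expansion

variable {X : Type*} [EMetricSpace X]

lemma expansion_step (e : X ≃ ℕ) (hBG : BoundedGeometry X) {E : Set (X × X)}
    {R₀ : ℝ≥0∞} (hE : E ⊆ Tube X R₀)
    (hfin : ∀ x : X, {y : X | edist x y ≤ R₀}.Finite)
    {c : ℝ} (hc : 0 < c)
    (hprop : ∀ ξ : H2, ∃ v : X → X → ℂ, IsPartialTranslation v ∧ matSupport v ⊆ E ∧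
      c * ‖ξ‖ ≤ ‖repPi e v ξ - repPi e (matMul v (matStar v)) ξ‖)
    (F : Finset X) :
    (1 + c ^ 2 / 2) * F.card ≤ ((F.biUnion (fun x => (hfin x).toFinset)).card : ℝ) := by
  classical
  set GF := F.biUnion (fun x => (hfin x).toFinset) with hGF
  have hFG : F ⊆ GF := by
    intro x hx
    refine Finset.mem_biUnion.mpr ⟨x, hx, ?_⟩
    rw [Set.Finite.mem_toFinset]
    simp
  set ind : ℕ → ℂ := fun i => if e.symm i ∈ F then 1 else 0 with hind
  have hindmem : Memℓp ind 2 := by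
    rw [memℓp_two_iff]
    refine summable_of_ne_finset_zero (s := F.image e) (fun i hi => ?_)
    have : e.symm i ∉ F := fun hmem => hi (Finset.mem_image.mpr ⟨_, hmem, by simp⟩)
    simp [hind, this]
  set ξF : H2 := ⟨ind, hindmem⟩ with hξF
  have hcoe : (ξF : ℕ → ℂ) = ind := rfl
  have hnormF : ‖ξF‖ ^ 2 = F.card := by
    rw [norm_sq_lp, hcoe]
    rw [tsum_eq_sum (s := F.image e) (fun i hi => by
      have : e.symm i ∉ F := fun hmem => hi (Finset.mem_image.mpr ⟨_, hmem, by simp⟩)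
      simp [hind, this])]
    have hval : ∀ i ∈ F.image e, ‖ind i‖ ^ 2 = 1 := by
      intro i hi
      obtain ⟨x, hx, rfl⟩ := Finset.mem_image.mp hi
      simp [hind, hx]
    rw [Finset.sum_congr rfl hval, Finset.sum_const,
      Finset.card_image_of_injective _ e.injective]
    simp
  obtain ⟨v, hv, hvE, hineq⟩ := hprop ξF
  set η : H2 := repPi e v ξF - repPi e (matMul v (matStar v)) ξF with hη
  have hineq2 : c ^ 2 * F.card ≤ ‖η‖ ^ 2 := by
    have h1 : (c * ‖ξF‖) ^ 2 ≤ ‖η‖ ^ 2 := by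
      refine pow_le_pow_left₀ (by positivity) hineq 2
    rw [mul_pow, hnormF] at h1
    exact h1
  have hNv : NiceMat (cnj e v) := niceMat_cnj e hBG hv.cuElem
  set g : X → ℂ := fun a => if a ∈ ptRange v then (1:ℂ) else 0 with hg
  have hgB : BddFun g := ⟨1, fun a => by by_cases h : a ∈ ptRange v <;> simp [hg, h]⟩
  have hNd : NiceMat (cnj e (matMul v (matStar v))) := by
    rw [v_mul_star hv, ← hg]
    exact niceMat_cnj e hBG (cuElem_diag hgB)
  set tv : X → X := fun x => if h : x ∈ ptRange v then Classical.choose h else x with htv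
  have htv1 : ∀ x, x ∈ ptRange v → v x (tv x) = 1 := by
    intro x h
    rw [htv]
    simp only [dif_pos h]
    exact Classical.choose_spec h
  have hcoord2 : ∀ i, ((repPi e (matMul v (matStar v)) ξF : H2) : ℕ → ℂ) i
      = g (e.symm i) * ind i := by
    intro i
    rw [repPi_apply hNd]
    have hrw : ∀ k, cnj e (matMul v (matStar v)) i k * ind k
        = cnj e (diag g) i k * ind k := by
      intro k
      rw [v_mul_star hv, ← hg]
    rw [hcoe, tsum_congr hrw]
    rw [tsum_eq_single i (fun k hk => ?_)]
    · show diag g (e.symm i) (e.symm i) * ind i = _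
      simp [diag]
    · have h1 : e.symm i ≠ e.symm k := by
        intro h
        exact hk (by simpa using (congrArg e h).symm)
      show diag g (e.symm i) (e.symm k) * ind k = 0
      simp [diag, h1]
  have hcoord1 : ∀ i, ((repPi e v ξF : H2) : ℕ → ℂ) i
      = (if e.symm i ∈ ptRange v then ind (e (tv (e.symm i))) else 0) := by
    intro i
    rw [repPi_apply hNv, hcoe]
    by_cases h : (e.symm i) ∈ ptRange v
    · rw [if_pos h]
      have hvval : cnj e v i (e (tv (e.symm i))) = 1 := by
        show v (e.symm i) (e.symm (e (tv (e.symm i)))) = 1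
        rw [Equiv.symm_apply_apply]
        exact htv1 _ h
      calc (∑' k, cnj e v i k * ind k)
          = cnj e v i (e (tv (e.symm i))) * ind (e (tv (e.symm i))) := by
            refine tsum_eq_single _ (fun k hk => ?_)
            rcases hv.1 (e.symm i) (e.symm k) with h0 | h1
            · show v (e.symm i) (e.symm k) * ind k = 0
              rw [h0, zero_mul]
            · exfalso
              have := hv.2.1 (e.symm i) (e.symm k) (tv (e.symm i)) h1 (htv1 _ h)
              exact hk (by simpa using (congrArg e this))
        _ = ind (e (tv (e.symm i))) := by rw [hvval, one_mul]
    · rw [if_neg h]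
      have hzero : ∀ k, cnj e v i k * ind k = 0 := by
        intro k
        rcases hv.1 (e.symm i) (e.symm k) with h0 | h1
        · show v (e.symm i) (e.symm k) * ind k = 0
          rw [h0, zero_mul]
        · exact absurd ⟨_, h1⟩ h
      rw [tsum_congr hzero, tsum_zero]
  -- pointwise bound
  set u : ℕ → ℝ := fun i => if (e.symm i ∈ GF ∧ e.symm i ∉ F) then 1 else 0 with hu
  set w : ℕ → ℝ := fun i =>
    if (e.symm i ∈ F ∧ e.symm i ∈ ptRange v ∧ tv (e.symm i) ∉ F) then 1 else 0 with hw
  have hu0 : ∀ i, 0 ≤ u i := by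
    intro i
    rw [hu]
    dsimp only
    split <;> norm_num
  have hw0 : ∀ i, 0 ≤ w i := by
    intro i
    rw [hw]
    dsimp only
    split <;> norm_num
  have hptw : ∀ i, ‖(η : ℕ → ℂ) i‖ ^ 2 ≤ u i + w i := by
    intro i
    have hηi : (η : ℕ → ℂ) i
        = (if e.symm i ∈ ptRange v then ind (e (tv (e.symm i))) else 0)
          - g (e.symm i) * ind i := by
      rw [hη, lp.coeFn_sub, Pi.sub_apply, hcoord1, hcoord2]
    set x := e.symm i with hx
    by_cases hpt : x ∈ ptRange v
    · have hgx : g x = 1 := by simp [hg, hpt]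
      have hindtv : ind (e (tv x)) = if tv x ∈ F then (1:ℂ) else 0 := by
        simp [hind]
      by_cases hxF : x ∈ F
      · have hui : u i = 0 := by simp [hu, ← hx, hxF]
        by_cases htvF : tv x ∈ F
        · have : (η : ℕ → ℂ) i = 0 := by
            rw [hηi, if_pos hpt, hindtv, if_pos htvF, hgx]
            simp [hind, ← hx, hxF]
          rw [this, hui]
          have := hw0 i
          simp only [norm_zero]
          norm_num
          linarith
        · have : (η : ℕ → ℂ) i = -1 := by
            rw [hηi, if_pos hpt, hindtv, if_neg htvF, hgx]
            simp [hind, ← hx, hxF]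
          rw [this, hui]
          have hwi : w i = 1 := by simp [hw, ← hx, hxF, hpt, htvF]
          rw [hwi]
          norm_num
      · have hwi : w i = 0 := by simp [hw, ← hx, hxF]
        have hP : g x * ind i = 0 := by
          simp [hind, ← hx, hxF]
        by_cases htvF : tv x ∈ F
        · have hηval : (η : ℕ → ℂ) i = 1 := by
            rw [hηi, if_pos hpt, hindtv, if_pos htvF, hP]
            ring
          have hxGF : x ∈ GF := by
            have hsupp : ((x, tv x) : X × X) ∈ matSupport v := by
              simp only [matSupport, Set.mem_setOf_eq, htv1 x hpt]
              exact one_ne_zero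
            have hd : edist x (tv x) ≤ R₀ := hE (hvE hsupp)
            refine Finset.mem_biUnion.mpr ⟨tv x, htvF, ?_⟩
            rw [Set.Finite.mem_toFinset]
            show edist (tv x) x ≤ R₀
            rwa [edist_comm]
          have hui : u i = 1 := by simp [hu, ← hx, hxGF, hxF]
          rw [hηval, hui, hwi]
          norm_num
        · have hηval : (η : ℕ → ℂ) i = 0 := by
            rw [hηi, if_pos hpt, hindtv, if_neg htvF, hP]
            ring
          rw [hηval, hwi]
          have := hu0 i
          simp only [norm_zero]
          norm_num
          linarith
    · have : (η : ℕ → ℂ) i = 0 := by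
        rw [hηi, if_neg hpt]
        have hgz : g x = 0 := by simp [hg, hpt]
        rw [hgz]
        ring
      rw [this]
      have := hu0 i
      have := hw0 i
      simp only [norm_zero]
      norm_num
      linarith
  -- summability and counting
  have hηsum : Summable (fun i => ‖(η : ℕ → ℂ) i‖ ^ 2) := (memℓp_two_iff _).mp (lp.memℓp η)
  have husum : Summable u := by
    refine summable_of_ne_finset_zero (s := GF.image e) (fun i hi => ?_)
    have : ¬(e.symm i ∈ GF ∧ e.symm i ∉ F) := by
      rintro ⟨h1, -⟩
      exact hi (Finset.mem_image.mpr ⟨_, h1, by simp⟩)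
    simp [hu, this]
  have hwsum : Summable w := by
    refine summable_of_ne_finset_zero (s := F.image e) (fun i hi => ?_)
    have : ¬(e.symm i ∈ F ∧ e.symm i ∈ ptRange v ∧ tv (e.symm i) ∉ F) := by
      rintro ⟨h1, -⟩
      exact hi (Finset.mem_image.mpr ⟨_, h1, by simp⟩)
    simp [hw, this]
  have hbound : ‖η‖ ^ 2 ≤ ∑' i, u i + ∑' i, w i := by
    rw [norm_sq_lp]
    calc ∑' i, ‖(η : ℕ → ℂ) i‖ ^ 2 ≤ ∑' i, (u i + w i) :=
          Summable.tsum_le_tsum hptw hηsum (husum.add hwsum)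
      _ = ∑' i, u i + ∑' i, w i := Summable.tsum_add husum hwsum
  have hucount : ∑' i, u i ≤ ((GF \ F).card : ℝ) := by
    rw [tsum_eq_sum (s := (GF \ F).image e) (fun i hi => by
      have : ¬(e.symm i ∈ GF ∧ e.symm i ∉ F) := by
        rintro ⟨h1, h2⟩
        exact hi (Finset.mem_image.mpr ⟨_, Finset.mem_sdiff.mpr ⟨h1, h2⟩, by simp⟩)
      simp [hu, this])]
    calc ∑ i ∈ (GF \ F).image e, u i ≤ ∑ _i ∈ (GF \ F).image e, (1:ℝ) := by
          refine Finset.sum_le_sum (fun i _ => ?_)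
          simp only [hu]
          split <;> norm_num
      _ = ((GF \ F).image e).card := by rw [Finset.sum_const]; simp
      _ ≤ ((GF \ F).card : ℝ) := by
          exact_mod_cast Finset.card_image_le
  have hwcount : ∑' i, w i ≤ ((GF \ F).card : ℝ) := by
    rw [tsum_eq_sum (s := F.image e) (fun i hi => by
      have : ¬(e.symm i ∈ F ∧ e.symm i ∈ ptRange v ∧ tv (e.symm i) ∉ F) := by
        rintro ⟨h1, -⟩
        exact hi (Finset.mem_image.mpr ⟨_, h1, by simp⟩)
      simp [hw, this])]
    have hw_eq : ∀ i ∈ F.image e, w i = if (e.symm i ∈ F ∧ e.symm i ∈ ptRange v ∧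
        tv (e.symm i) ∉ F) then (1:ℝ) else 0 := fun i _ => rfl
    rw [Finset.sum_congr rfl hw_eq, Finset.sum_boole]
    have hinj : Set.InjOn (fun i => tv (e.symm i))
        ((F.image e).filter (fun i => e.symm i ∈ F ∧ e.symm i ∈ ptRange v ∧
          tv (e.symm i) ∉ F)) := by
      intro i hi i' hi' heq
      obtain ⟨-, h2⟩ := Finset.mem_filter.mp hi
      obtain ⟨-, h2'⟩ := Finset.mem_filter.mp hi'
      have heq' : tv (e.symm i) = tv (e.symm i') := heq
      have hv1 : v (e.symm i) (tv (e.symm i)) = 1 := htv1 _ h2.2.1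
      have hv2 : v (e.symm i') (tv (e.symm i)) = 1 := by
        rw [heq']
        exact htv1 _ h2'.2.1
      have := hv.2.2.1 (e.symm i) (e.symm i') (tv (e.symm i)) hv1 hv2
      simpa using (congrArg e this)
    have hmapsto : ∀ i ∈ (F.image e).filter (fun i => e.symm i ∈ F ∧
        e.symm i ∈ ptRange v ∧ tv (e.symm i) ∉ F), tv (e.symm i) ∈ GF \ F := by
      intro i hi
      obtain ⟨-, hF1, hpt1, htv1'⟩ := Finset.mem_filter.mp hi
      refine Finset.mem_sdiff.mpr ⟨?_, htv1'⟩
      have hsupp : ((e.symm i, tv (e.symm i)) : X × X) ∈ matSupport v := by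
        simp only [matSupport, Set.mem_setOf_eq, htv1 _ hpt1]
        exact one_ne_zero
      have hd : edist (e.symm i) (tv (e.symm i)) ≤ R₀ := hE (hvE hsupp)
      refine Finset.mem_biUnion.mpr ⟨e.symm i, hF1, ?_⟩
      rw [Set.Finite.mem_toFinset]
      exact hd
    have := Finset.card_le_card_of_injOn _ hmapsto hinj
    exact_mod_cast this
  have hcards : ((GF \ F).card : ℝ) = (GF.card : ℝ) - F.card := by
    rw [Finset.card_sdiff_of_subset hFG]
    push_cast [Finset.card_le_card hFG]
    ring
  have hle : (GF.card : ℝ) ≥ F.card := by exact_mod_cast Finset.card_le_card hFG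
  rw [hcards] at hucount hwcount
  nlinarith [hineq2, hbound, hucount, hwcount]

end Expansion
section HallSection

variable {X : Type*}

lemma iterate_growth (Nb : Finset X → Finset X) {δ : ℝ} (hδ : 0 ≤ δ)
    (hgrow : ∀ F : Finset X, (1 + δ) * F.card ≤ ((Nb F).card : ℝ)) :
    ∀ (k : ℕ) (F : Finset X), (1 + δ) ^ k * F.card ≤ ((Nb^[k] F).card : ℝ) := by
  intro k
  induction k with
  | zero => intro F; simp
  | succ k ih =>
      intro F
      rw [Function.iterate_succ_apply']
      calc (1 + δ) ^ (k+1) * F.card = (1 + δ) * ((1 + δ) ^ k * F.card) := by ring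
        _ ≤ (1 + δ) * ((Nb^[k] F).card : ℝ) := by
            refine mul_le_mul_of_nonneg_left (ih F) (by linarith)
        _ ≤ ((Nb (Nb^[k] F)).card : ℝ) := hgrow _

lemma iterate_biUnion (Nb : Finset X → Finset X)
    (hNb : ∀ (A : Finset X) (t : X → Finset X),
      Nb (A.biUnion t) = A.biUnion (fun x => Nb (t x))) :
    ∀ (k : ℕ) (F : Finset X), Nb^[k] F = F.biUnion (fun x => Nb^[k] ({x} : Finset X)) := by
  intro k
  induction k with
  | zero =>
      intro F
      simp only [Function.iterate_zero, id_eq]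
      exact (Finset.biUnion_singleton_eq_self).symm
  | succ k ih =>
      intro F
      rw [Function.iterate_succ_apply', ih F, hNb]
      refine Finset.biUnion_congr rfl (fun x _ => ?_)
      rw [Function.iterate_succ_apply']

lemma exists_two_to_one_injection {δ : ℝ} (hδ : 0 < δ) (Nb : Finset X → Finset X)
    (hNb : ∀ (A : Finset X) (t : X → Finset X),
      Nb (A.biUnion t) = A.biUnion (fun x => Nb (t x)))
    (hgrow : ∀ F : Finset X, (1 + δ) * F.card ≤ ((Nb F).card : ℝ)) :
    ∃ (k : ℕ) (f : X × Bool → X), Function.Injective f ∧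
      ∀ p : X × Bool, f p ∈ Nb^[k] ({p.1} : Finset X) := by
  classical
  obtain ⟨k, hk⟩ := pow_unbounded_of_one_lt (2:ℝ) (by linarith : (1:ℝ) < 1 + δ)
  have hdouble : ∀ F : Finset X, 2 * F.card ≤ ((Nb^[k] F).card : ℝ) := by
    intro F
    calc (2:ℝ) * F.card ≤ (1 + δ) ^ k * F.card := by
          refine mul_le_mul_of_nonneg_right (le_of_lt hk) (by positivity)
      _ ≤ _ := iterate_growth Nb (le_of_lt hδ) hgrow k F
  set t : X × Bool → Finset X := fun p => Nb^[k] ({p.1} : Finset X) with ht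
  have hall : ∀ S : Finset (X × Bool), S.card ≤ (S.biUnion t).card := by
    intro S
    set F := S.image Prod.fst with hF
    have h1 : S.biUnion t = F.biUnion (fun x => Nb^[k] ({x} : Finset X)) := by
      ext y
      simp only [Finset.mem_biUnion]
      constructor
      · rintro ⟨p, hp, hy⟩
        exact ⟨p.1, Finset.mem_image_of_mem _ hp, hy⟩
      · rintro ⟨x, hx, hy⟩
        obtain ⟨p, hp, rfl⟩ := Finset.mem_image.mp hx
        exact ⟨p, hp, hy⟩
    have h2 : S.card ≤ 2 * F.card := by
      have hsub : S ⊆ F ×ˢ (Finset.univ : Finset Bool) := by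
        intro p hp
        exact Finset.mem_product.mpr ⟨Finset.mem_image_of_mem _ hp, Finset.mem_univ _⟩
      calc S.card ≤ (F ×ˢ (Finset.univ : Finset Bool)).card := Finset.card_le_card hsub
        _ = F.card * 2 := by
            rw [Finset.card_product]
            congr 1
        _ = 2 * F.card := by ring
    have h3 : (2 * F.card : ℝ) ≤ ((Nb^[k] F).card : ℝ) := hdouble F
    have h4 : 2 * F.card ≤ (Nb^[k] F).card := by exact_mod_cast h3
    calc S.card ≤ 2 * F.card := h2
      _ ≤ (Nb^[k] F).card := h4
      _ = (S.biUnion t).card := by rw [h1, iterate_biUnion Nb hNb k F]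
  obtain ⟨f, hfinj, hft⟩ := (Finset.all_card_le_biUnion_card_iff_exists_injective t).mp hall
  exact ⟨k, f, hfinj, hft⟩

end HallSection
/-- An infinite, coarsely connected space with Property (T) is not
amenable; consequently every representation has no nonzero invariant vectors. -/
theorem statement4 {X : Type*} [EMetricSpace X] [Infinite X] (hX : IsSpace X)
    (hcc : ∀ x y : X, edist x y < ⊤) (hT : HasPropertyT X) :
    ¬ IsAmenable X ∧
      ∀ (H : Type) [NormedAddCommGroup H] [InnerProductSpace ℂ H] [CompleteSpace H]
        (π : (X → X → ℂ) → (H →L[ℂ] H)), IsRepresentation π →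
        invariantSubmodule π = ⊥ := by
  classical
  have hBG := hX.boundedGeometry
  haveI hcount : Countable X := by
    obtain ⟨x₀⟩ := (inferInstance : Nonempty X)
    have hcov : (Set.univ : Set X) ⊆ ⋃ n : ℕ, {y : X | edist x₀ y ≤ (n : ℝ≥0∞)} := by
      intro y _
      obtain ⟨n, hn⟩ := ENNReal.exists_nat_gt (ne_of_lt (hcc x₀ y))
      exact Set.mem_iUnion.mpr ⟨n, le_of_lt hn⟩
    have hctb : (Set.univ : Set X).Countable := by
      refine Set.Countable.mono hcov ?_
      refine Set.countable_iUnion (fun n => ?_)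
      obtain ⟨N, hN⟩ := hBG (n : ℝ≥0∞) (ENNReal.natCast_lt_top n)
      exact ((hN x₀).1).countable
    exact Set.countable_univ_iff.mp hctb
  haveI : Encodable X := Encodable.ofCountable X
  haveI : Denumerable X := Denumerable.ofEncodableOfInfinite X
  set e : X ≃ ℕ := Denumerable.eqv X with he
  have hrep : IsRepresentation (repPi e) := isRep_repPi e hBG
  have hbot : invariantSubmodule (repPi e) = ⊥ := invariant_bot e hBG hcc
  have hnotam : ¬ IsAmenable X := by
    rintro ⟨φ, haddφ, hsmulφ, honeφ, hposφ, hinvφ⟩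
    obtain ⟨E, hgen⟩ := hX.monogenic
    obtain ⟨c, hc, hprop⟩ := hT E hgen
    have hprop2 := hprop H2 (repPi e) hrep
    obtain ⟨R₀, hR₀, hEsub⟩ := hgen.1
    have hfin : ∀ x : X, {y : X | edist x y ≤ R₀}.Finite :=
      fun x => ((hBG R₀ hR₀).choose_spec x).1
    have hprop3 : ∀ ξ : H2, ∃ v : X → X → ℂ, IsPartialTranslation v ∧ matSupport v ⊆ E ∧
        c * ‖ξ‖ ≤ ‖repPi e v ξ - repPi e (matMul v (matStar v)) ξ‖ := by
      intro ξ
      refine hprop2 ξ ?_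
      rw [hbot, Submodule.mem_orthogonal]
      intro u hu
      rw [Submodule.mem_bot] at hu
      rw [hu]
      exact inner_zero_left ξ
    set δ : ℝ := c ^ 2 / 2 with hδdef
    have hδ : 0 < δ := by positivity
    set Nb : Finset X → Finset X := fun F => F.biUnion (fun x => (hfin x).toFinset)
      with hNbdef
    have hgrow : ∀ F : Finset X, (1 + δ) * F.card ≤ ((Nb F).card : ℝ) := by
      intro F
      exact expansion_step e hBG hEsub hfin hc hprop3 F
    have hNb : ∀ (A : Finset X) (t : X → Finset X),
        Nb (A.biUnion t) = A.biUnion (fun x => Nb (t x)) := by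
      intro A t
      rw [hNbdef]
      exact Finset.biUnion_biUnion A t _
    obtain ⟨k, f, hfinj, hft⟩ := exists_two_to_one_injection hδ Nb hNb hgrow
    have hdist : ∀ (m : ℕ) (x y : X), y ∈ Nb^[m] ({x} : Finset X) →
        edist x y ≤ (m : ℝ≥0∞) * R₀ := by
      intro m
      induction m with
      | zero =>
          intro x y hy
          simp only [Function.iterate_zero, id_eq, Finset.mem_singleton] at hy
          simp [hy]
      | succ m ih =>
          intro x y hy
          rw [Function.iterate_succ_apply'] at hy
          obtain ⟨z, hz, hyz⟩ := Finset.mem_biUnion.mp hy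
          have h1 := ih x z hz
          have h2 : edist z y ≤ R₀ := by
            rw [Set.Finite.mem_toFinset] at hyz
            exact hyz
          calc edist x y ≤ edist x z + edist z y := edist_triangle _ _ _
            _ ≤ (m : ℝ≥0∞) * R₀ + R₀ := add_le_add h1 h2
            _ = ((m + 1 : ℕ) : ℝ≥0∞) * R₀ := by push_cast; ring
    have hpt : ∀ b : Bool,
        IsPartialTranslation (fun a y => if a = f (y, b) then (1:ℂ) else 0) := by
      intro b
      refine ⟨?_, ?_, ?_, ?_⟩
      · intro a y
        by_cases h : a = f (y, b) <;> simp [h]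
      · intro a y y' h1 h2
        have h1' : (if a = f (y, b) then (1:ℂ) else 0) = 1 := h1
        have h2' : (if a = f (y', b) then (1:ℂ) else 0) = 1 := h2
        have e1 : a = f (y, b) := by
          by_contra h
          rw [if_neg h] at h1'
          exact one_ne_zero h1'.symm
        have e2 : a = f (y', b) := by
          by_contra h
          rw [if_neg h] at h2'
          exact one_ne_zero h2'.symm
        have h3 := hfinj (e1.symm.trans e2)
        exact (Prod.ext_iff.mp h3).1
      · intro a a' y h1 h2
        have h1' : (if a = f (y, b) then (1:ℂ) else 0) = 1 := h1
        have h2' : (if a' = f (y, b) then (1:ℂ) else 0) = 1 := h2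
        have e1 : a = f (y, b) := by
          by_contra h
          rw [if_neg h] at h1'
          exact one_ne_zero h1'.symm
        have e2 : a' = f (y, b) := by
          by_contra h
          rw [if_neg h] at h2'
          exact one_ne_zero h2'.symm
        rw [e1, e2]
      · refine ⟨(k : ℝ≥0∞) * R₀, ENNReal.mul_lt_top (ENNReal.natCast_lt_top k) hR₀, ?_⟩
        intro p hp
        have e1 : p.1 = f (p.2, b) := by
          by_contra h
          exact hp (if_neg h)
        have h2 : p.1 ∈ Nb^[k] ({p.2} : Finset X) := by
          rw [e1]
          exact hft (p.2, b)
        show edist p.1 p.2 ≤ (k : ℝ≥0∞) * R₀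
        rw [edist_comm]
        exact hdist k p.2 p.1 h2
    set indC : Set X → (X → ℂ) := fun s x => if x ∈ s then 1 else 0 with hindC
    have hbddInd : ∀ s : Set X, BddFun (indC s) :=
      fun s => ⟨1, fun x => by by_cases h : x ∈ s <;> simp [hindC, h]⟩
    set A : Set X := Set.range (fun y => f (y, false)) with hA
    set B : Set X := Set.range (fun y => f (y, true)) with hB
    have hABdisj : ∀ x, x ∈ A → x ∈ B → False := by
      rintro x ⟨y, hy⟩ ⟨y', hy'⟩
      have h3 := hfinj (hy.trans hy'.symm)
      simpa using (Prod.ext_iff.mp h3).2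
    have hφrange : ∀ b : Bool, φ (indC (Set.range (fun y => f (y, b)))) = 1 := by
      intro b
      set s : Set X := Set.range (fun y => f (y, b)) with hs
      have htr : translateFun (fun a y => if a = f (y, b) then (1:ℂ) else 0) (indC s)
          = fun _ => 1 := by
        funext y
        rw [translateFun]
        rw [tsum_eq_single (f (y, b)) (fun x hx => by rw [if_neg hx, zero_mul])]
        simp only [if_pos rfl, one_mul]
        have hmem : f (y, b) ∈ s := ⟨y, rfl⟩
        simp [hindC, hmem]
      have hsupp : ∀ x, indC s x ≠ 0 →
          ∃ y, (fun a y => if a = f (y, b) then (1:ℂ) else 0) x y = 1 := by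
        intro x hx
        have hmem : x ∈ s := by
          by_contra h
          exact hx (by simp [hindC, h])
        obtain ⟨y, hy⟩ := hmem
        have hy' : f (y, b) = x := hy
        refine ⟨y, ?_⟩
        show (if x = f (y, b) then (1:ℂ) else 0) = 1
        rw [if_pos hy'.symm]
      have hres := hinvφ (indC s) (hbddInd s) _ (hpt b) hsupp
      rw [htr, honeφ] at hres
      exact hres.symm
    set Cc : Set X := (A ∪ B)ᶜ with hCc
    have hdecomp : (fun _ : X => (1:ℂ)) = indC A + (indC B + indC Cc) := by
      funext x
      simp only [Pi.add_apply, hindC]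
      by_cases hxA : x ∈ A
      · have hxB : x ∉ B := fun h => hABdisj x hxA h
        have hxC : x ∉ Cc := by simp [hCc, hxA]
        simp [hxA, hxB, hxC]
      · by_cases hxB : x ∈ B
        · have hxC : x ∉ Cc := by simp [hCc, hxB]
          simp [hxA, hxB, hxC]
        · have hxC : x ∈ Cc := by simp [hCc, hxA, hxB]
          simp [hxA, hxB, hxC]
    have hbddBC : BddFun (indC B + indC Cc) := by
      obtain ⟨M1, h1⟩ := hbddInd B
      obtain ⟨M2, h2⟩ := hbddInd Cc
      exact ⟨M1 + M2, fun x =>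
        le_trans (norm_add_le _ _) (add_le_add (h1 x) (h2 x))⟩
    have heq : (1:ℂ) = φ (indC A) + (φ (indC B) + φ (indC Cc)) := by
      calc (1:ℂ) = φ (fun _ => 1) := honeφ.symm
        _ = φ (indC A + (indC B + indC Cc)) := by rw [← hdecomp]
        _ = φ (indC A) + φ (indC B + indC Cc) := haddφ _ _ (hbddInd A) hbddBC
        _ = φ (indC A) + (φ (indC B) + φ (indC Cc)) := by
            rw [haddφ _ _ (hbddInd B) (hbddInd Cc)]
    have h1A : φ (indC A) = 1 := by rw [hA]; exact hφrange false
    have h1B : φ (indC B) = 1 := by rw [hB]; exact hφrange true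
    rw [h1A, h1B] at heq
    have hCneg : φ (indC Cc) = -1 := by linear_combination -heq
    have hCpos := hposφ (indC Cc) (hbddInd Cc) (fun x => by
      by_cases h : x ∈ Cc <;> simp [hindC, h])
    rw [hCneg] at hCpos
    norm_num at hCpos
  refine ⟨hnotam, ?_⟩
  intro H _ _ _ π hπ
  rw [Submodule.eq_bot_iff]
  intro ξ hξ
  by_contra hne
  exact hnotam (isAmenable_of_invariant_vector hπ hξ hne)
end GeomPropT
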